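/- arXiv:2604.01413 — 3 statements merged into one kernel-verified Lean document; each statement's English description precedes it below -/
import Mathlib

section
/- For exchangeable real-valued random variables S_1, ..., S_{n+1}, the probability that S_{n+1} is strictly less than at least ⌈(n+1)(1-α)⌉ of the values S_1, ..., S_{n+1} is at most α, for any α ∈ (0,1). -/
open MeasureTheory Finset ENNReal

/-- For injective `x`, the number of indices whose rank is at least `k` is `m - k`. -/
lemma rank_filter_card' {m : ℕ} (x : Fin m → ℝ) (hx : Function.Injective x) (k : ℕ) :
    (Finset.univ.filter (fun j : Fin m =>
      k ≤ (Finset.univ.filter (fun i => x j < x i)).card)).card = m - k := by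
  set r : Fin m → ℕ := fun j => (Finset.univ.filter (fun i => x j < x i)).card with hr
  have hmono : ∀ j j' : Fin m, x j < x j' → r j' < r j := by
    intro j j' h
    apply Finset.card_lt_card
    constructor
    · intro i hi
      simp only [mem_filter, mem_univ, true_and] at hi ⊢
      exact h.trans hi
    · intro hsub
      have := hsub (by simp [h] : j' ∈ Finset.univ.filter (fun i => x j < x i))
      simp at this
  have hlt : ∀ j, r j < m := by
    intro j
    have : Finset.univ.filter (fun i => x j < x i) ⊂ Finset.univ := by
      refine Finset.ssubset_univ_iff.mpr ?_
      intro h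
      have := h ▸ (Finset.mem_univ j)
      rw [Finset.mem_filter] at this
      exact lt_irrefl _ this.2
    simpa [Finset.card_univ] using Finset.card_lt_card this
  set e : Fin m → Fin m := fun j => ⟨r j, hlt j⟩ with he
  have hinj : Function.Injective e := by
    intro j j' h
    by_contra hne
    have hxne : x j ≠ x j' := fun hc => hne (hx hc)
    rcases lt_or_gt_of_ne hxne with hlt' | hlt'
    · exact absurd (Fin.mk_eq_mk.mp h) (hmono _ _ hlt').ne'
    · exact absurd (Fin.mk_eq_mk.mp h) (hmono _ _ hlt').ne
  have hbij : Function.Bijective e := (Finite.injective_iff_bijective).mp hinj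
  have hcard : (Finset.univ.filter (fun j : Fin m => k ≤ r j)).card
      = (Finset.univ.filter (fun v : Fin m => k ≤ (v : ℕ))).card := by
    apply Finset.card_bij (fun j _ => e j)
    · intro j hj
      simp only [mem_filter, mem_univ, true_and] at hj ⊢
      exact hj
    · intro a ha b hb h
      exact hinj h
    · intro v hv
      obtain ⟨j, hj⟩ := hbij.surjective v
      refine ⟨j, ?_, hj⟩
      simp only [mem_filter, mem_univ, true_and] at hv ⊢
      rw [← hj] at hv
      exact hv
  rw [hcard]
  rcases le_or_gt m k with hmk | hkm
  · have : (Finset.univ.filter (fun v : Fin m => k ≤ (v : ℕ))) = ∅ := by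
      apply Finset.filter_false_of_mem
      intro v _
      exact Nat.not_le.mpr (lt_of_lt_of_le v.isLt hmk)
    simp [this, Nat.sub_eq_zero_of_le hmk]
  · have : (Finset.univ.filter (fun v : Fin m => k ≤ (v : ℕ))) = Finset.Ici (⟨k, hkm⟩ : Fin m) := by
      ext v
      simp [Fin.le_def]
    rw [this, Fin.card_Ici]


/-- For exchangeable real-valued random variables `S 0, ..., S n` (that is,
`n+1` variables), the probability that the last one is strictly less than at
least `⌈(n+1)(1-α)⌉` of all the values is at most `α`. -/
theorem conformal_rank_bound
    {Ω : Type*} [MeasurableSpace Ω] (μ : Measure Ω) [IsProbabilityMeasure μ]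
    (n : ℕ) (S : Fin (n + 1) → Ω → ℝ)
    (hmeas : ∀ i, Measurable (S i))
    (hexch : ∀ σ : Equiv.Perm (Fin (n + 1)),
      Measure.map (fun ω => fun i => S (σ i) ω) μ =
      Measure.map (fun ω => fun i => S i ω) μ)
    (hdist : ∀ i j, i ≠ j → μ {ω | S i ω = S j ω} = 0)
    (α : ℝ) (hα : α ∈ Set.Ioo (0 : ℝ) 1) :
    (μ {ω | (⌈((n : ℝ) + 1) * (1 - α)⌉₊ : ℕ) ≤
        (Finset.univ.filter (fun i => S (Fin.last n) ω < S i ω)).card}).toReal ≤ α := by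
  obtain ⟨hα0, hα1⟩ := hα
  set k : ℕ := ⌈((n : ℝ) + 1) * (1 - α)⌉₊ with hk
  set E : Fin (n + 1) → Set Ω := fun j =>
    {ω | k ≤ (Finset.univ.filter (fun i => S j ω < S i ω)).card} with hE
  have hcardmeas : ∀ j, Measurable
      (fun ω => (Finset.univ.filter (fun i => S j ω < S i ω)).card) := by
    intro j
    have heq : (fun ω => (Finset.univ.filter (fun i => S j ω < S i ω)).card)
        = fun ω => ∑ i : Fin (n + 1), if S j ω < S i ω then 1 else 0 := by
      funext ω; rw [Finset.card_filter]
    rw [heq]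
    exact Finset.measurable_sum _ fun i _ =>
      Measurable.ite (measurableSet_lt (hmeas j) (hmeas i)) measurable_const measurable_const
  have hEmeas : ∀ j, MeasurableSet (E j) := fun j =>
    (hcardmeas j) (measurableSet_le measurable_const measurable_id)
  -- all events have the same measure
  have hsame : ∀ j, μ (E j) = μ (E (Fin.last n)) := by
    intro j
    have hσ := hexch (Equiv.swap j (Fin.last n))
    set σ := Equiv.swap j (Fin.last n) with hσdef
    set g : (Fin (n + 1) → ℝ) → ℕ :=
      fun x => (Finset.univ.filter (fun i => x (Fin.last n) < x i)).card with hg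
    have hgmeas : Measurable g := by
      have heq : g = fun x => ∑ i : Fin (n + 1), if x (Fin.last n) < x i then 1 else 0 := by
        funext x
        simp only [hg, Finset.card_filter]
      rw [heq]
      exact Finset.measurable_sum _ fun i _ =>
        Measurable.ite (measurableSet_lt (measurable_pi_apply _) (measurable_pi_apply _))
          measurable_const measurable_const
    have hA : MeasurableSet {x : Fin (n + 1) → ℝ | k ≤ g x} :=
      hgmeas (measurableSet_le measurable_const measurable_id)
    have hT : Measurable (fun ω => fun i : Fin (n + 1) => S i ω) :=
      measurable_pi_lambda _ fun i => hmeas i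
    have hTσ : Measurable (fun ω => fun i : Fin (n + 1) => S (σ i) ω) :=
      measurable_pi_lambda _ fun i => hmeas (σ i)
    have h1 := congrArg (fun ν : Measure (Fin (n + 1) → ℝ) =>
      ν {x : Fin (n + 1) → ℝ | k ≤ g x}) hσ
    rw [Measure.map_apply hTσ hA, Measure.map_apply hT hA] at h1
    have hpre1 : (fun ω => fun i : Fin (n + 1) => S (σ i) ω) ⁻¹'
        {x : Fin (n + 1) → ℝ | k ≤ g x} = E j := by
      ext ω
      simp only [Set.mem_preimage, Set.mem_setOf_eq, hE, hg]
      have hσlast : σ (Fin.last n) = j := Equiv.swap_apply_right _ _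
      simp only [hσlast]
      have hc : (Finset.univ.filter (fun i => S j ω < S (σ i) ω)).card
          = (Finset.univ.filter (fun i => S j ω < S i ω)).card := by
        rw [Finset.card_filter, Finset.card_filter]
        exact Fintype.sum_equiv σ _ _ (fun i => rfl)
      rw [hc]
    have hpre2 : (fun ω => fun i : Fin (n + 1) => S i ω) ⁻¹'
        {x : Fin (n + 1) → ℝ | k ≤ g x} = E (Fin.last n) := by
      ext ω; simp only [Set.mem_preimage, Set.mem_setOf_eq, hE, hg]
    rw [hpre1, hpre2] at h1
    exact h1
  -- a.e. injectivity
  have hae : ∀ᵐ ω ∂μ, Function.Injective (fun i => S i ω) := by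
    have hD : μ (⋃ (i : Fin (n + 1)) (j : Fin (n + 1)) (_ : i ≠ j),
        {ω | S i ω = S j ω}) = 0 :=
      measure_iUnion_null fun i => measure_iUnion_null fun j => measure_iUnion_null fun h =>
        hdist i j h
    rw [ae_iff]
    apply measure_mono_null _ hD
    intro ω hω
    simp only [Set.mem_setOf_eq] at hω
    obtain ⟨i, j, hij, hne⟩ := Function.not_injective_iff.mp hω
    exact Set.mem_iUnion.mpr ⟨i, Set.mem_iUnion.mpr ⟨j, Set.mem_iUnion.mpr ⟨hne, hij⟩⟩⟩
  -- sum of indicators is a.e. the constant (n + 1 - k)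
  have haesum : ∀ᵐ ω ∂μ, ∑ j : Fin (n + 1), (E j).indicator (fun _ => (1 : ℝ≥0∞)) ω
      = ((n + 1 - k : ℕ) : ℝ≥0∞) := by
    filter_upwards [hae] with ω hω
    have h2 : ∑ j : Fin (n + 1), (E j).indicator (fun _ => (1 : ℝ≥0∞)) ω
        = ((Finset.univ.filter (fun j : Fin (n + 1) => ω ∈ E j)).card : ℝ≥0∞) := by
      rw [Finset.card_filter]
      push_cast
      refine Finset.sum_congr rfl fun j _ => ?_
      by_cases h : ω ∈ E j <;> simp [h]
    rw [h2]
    congr 1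
    have h3 := rank_filter_card' (fun i => S i ω) hω k
    simp only [hE, Set.mem_setOf_eq]
    exact h3
  -- total computation
  have hsum : ∑ j : Fin (n + 1), μ (E j) = ((n + 1 - k : ℕ) : ℝ≥0∞) := by
    calc ∑ j : Fin (n + 1), μ (E j)
        = ∑ j : Fin (n + 1), ∫⁻ ω, (E j).indicator (fun _ => (1 : ℝ≥0∞)) ω ∂μ :=
          Finset.sum_congr rfl fun j _ => (lintegral_indicator_one (hEmeas j)).symm
      _ = ∫⁻ ω, ∑ j : Fin (n + 1), (E j).indicator (fun _ => (1 : ℝ≥0∞)) ω ∂μ :=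
          (lintegral_finset_sum _ fun j _ => (measurable_one.indicator (hEmeas j))).symm
      _ = ∫⁻ _, ((n + 1 - k : ℕ) : ℝ≥0∞) ∂μ := lintegral_congr_ae haesum
      _ = ((n + 1 - k : ℕ) : ℝ≥0∞) := by simp
  have hmain : ((n + 1 : ℕ) : ℝ≥0∞) * μ (E (Fin.last n)) = ((n + 1 - k : ℕ) : ℝ≥0∞) := by
    rw [← hsum, Finset.sum_congr rfl fun j _ => hsame j]
    simp [Finset.card_univ, mul_comm]
  -- convert to reals
  have hreal : ((n + 1 : ℕ) : ℝ) * (μ (E (Fin.last n))).toReal = ((n + 1 - k : ℕ) : ℝ) := by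
    have h4 := congrArg ENNReal.toReal hmain
    rwa [ENNReal.toReal_mul, ENNReal.toReal_natCast, ENNReal.toReal_natCast] at h4
  have hkub : ((n : ℝ) + 1) * (1 - α) ≤ (k : ℝ) := Nat.le_ceil _
  have hklem : k ≤ n + 1 := by
    rw [hk]
    apply Nat.ceil_le.mpr
    push_cast
    nlinarith
  have hmk : ((n + 1 - k : ℕ) : ℝ) = ((n : ℝ) + 1) - k := by
    rw [Nat.cast_sub hklem]; push_cast; ring
  rw [hmk] at hreal
  have hmpos : (0 : ℝ) < (n : ℝ) + 1 := by positivity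
  have hgoal : (μ (E (Fin.last n))).toReal ≤ α := by
    have h5 : ((n : ℝ) + 1) * (μ (E (Fin.last n))).toReal ≤ ((n : ℝ) + 1) * α := by
      push_cast at hreal
      nlinarith
    exact le_of_mul_le_mul_left h5 hmpos
  exact hgoal
end

section
/- Split conformal prediction coverage: let (X_1,Y_1),...,(X_{n+1},Y_{n+1}) be exchangeable, let S be a fixed score function, set s_i = S(X_i,Y_i), and let q̂ be the ⌈(n+1)(1-α)⌉/n empirical quantile of s_1,...,s_n (assume ⌈(n+1)(1-α)⌉ ≤ n). Then P(s_{n+1} ≤ q̂) ≥ 1 - α. -/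
open MeasureTheory ENNReal

/-- The `k`-th smallest value (1-indexed) among `f 0, ..., f (n-1)`. -/
noncomputable def orderStat {n : ℕ} (f : Fin n → ℝ) (k : ℕ) : ℝ :=
  (List.insertionSort (· ≤ ·) (List.ofFn f)).getD (k - 1) 0


lemma sorted_getD_le_iff : ∀ {l : List ℝ}, l.Pairwise (· ≤ ·) → ∀ {m : ℕ}, m < l.length → ∀ c : ℝ,
    (l.getD m 0 ≤ c ↔ m < l.countP (fun x => decide (x ≤ c)))
  | [], _, m, hm, c => by simp at hm
  | a :: t, hl, m, hm, c => by
    rw [List.pairwise_cons] at hl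
    obtain ⟨ha, ht⟩ := hl
    match m with
    | 0 =>
      simp only [List.getD_cons_zero, List.countP_cons]
      constructor
      · intro h
        have hd : decide (a ≤ c) = true := by simpa using h
        simp [hd]
      · intro h
        by_cases hac : a ≤ c
        · exact hac
        · simp [hac] at h
          obtain ⟨x, hx, hxc⟩ := h
          exact absurd (le_trans (ha x hx) hxc) hac
    | m + 1 =>
      simp only [List.getD_cons_succ, List.countP_cons]
      simp only [List.length_cons, Nat.add_lt_add_iff_right] at hm
      by_cases hac : a ≤ c
      · have := sorted_getD_le_iff ht hm c
        simp only [hac]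
        simp only [decide_eq_true_eq]  -- maybe not needed
        rw [this]
        simp
      · have h0 : t.countP (fun x => decide (x ≤ c)) = 0 := by
          rw [List.countP_eq_zero]
          intro x hx
          simpa using fun h => hac (le_trans (ha x hx) h)
        simp only [hac, h0]
        constructor
        · intro h
          exfalso
          have hmem : t.getD m 0 ∈ t := by
            rw [List.getD_eq_getElem t 0 hm]
            exact List.getElem_mem hm
          exact hac (le_trans (ha _ hmem) h)
        · simp


lemma countP_ofFn' {m : ℕ} (f : Fin m → ℝ) (p : ℝ → Bool) :
    (List.ofFn f).countP p = (Finset.univ.filter (fun i => p (f i))).card := by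
  have h := Fin.univ_val_map f
  calc (List.ofFn f).countP p
      = Multiset.countP (fun x => p x) (↑(List.ofFn f)) := by
        rw [Multiset.coe_countP]; simp
    _ = Multiset.countP (fun x => p x) (Multiset.map f Finset.univ.val) := by rw [h]
    _ = Multiset.countP (fun i => p (f i)) Finset.univ.val := by
        rw [Multiset.countP_map, Multiset.countP_eq_card_filter]
    _ = (Finset.univ.filter (fun i => p (f i))).card := by
        rw [Finset.card, Finset.filter_val, Multiset.countP_eq_card_filter]


lemma orderStat_le_iff {m : ℕ} (f : Fin m → ℝ) {k : ℕ} (hk1 : 1 ≤ k) (hkm : k ≤ m) (c : ℝ) :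
    orderStat f k ≤ c ↔ k ≤ (Finset.univ.filter (fun i => f i ≤ c)).card := by
  set l := List.insertionSort (· ≤ ·) (List.ofFn f) with hl
  have hsort : l.Pairwise (· ≤ ·) := List.pairwise_insertionSort _ _
  have hperm : l.Perm (List.ofFn f) := List.perm_insertionSort _ _
  have hlen : l.length = m := by rw [hperm.length_eq, List.length_ofFn]
  have hmlt : k - 1 < l.length := by omega
  have hcount : l.countP (fun x => decide (x ≤ c)) = (List.ofFn f).countP (fun x => decide (x ≤ c)) :=
    hperm.countP_eq _
  rw [orderStat, ← hl, sorted_getD_le_iff hsort hmlt c, hcount,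
    countP_ofFn' f (fun x => decide (x ≤ c))]
  simp only [decide_eq_true_eq]
  omega

lemma orderStat_congr {m : ℕ} {f g : Fin m → ℝ} (h : (List.ofFn f).Perm (List.ofFn g)) (k : ℕ) :
    orderStat f k = orderStat g k := by
  unfold orderStat
  congr 1
  apply List.Perm.eq_of_pairwise' (List.pairwise_insertionSort _ _) (List.pairwise_insertionSort _ _)
  exact ((List.perm_insertionSort _ _).trans h).trans (List.perm_insertionSort _ _).symm

lemma measurable_orderStat {m : ℕ} {k : ℕ} (hk1 : 1 ≤ k) (hkm : k ≤ m) :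
    Measurable (fun f : Fin m → ℝ => orderStat f k) := by
  apply measurable_of_Iic
  intro c
  have : (fun f : Fin m → ℝ => orderStat f k) ⁻¹' Set.Iic c
      = ⋃ (T : Finset (Fin m)) (_ : k ≤ T.card), ⋂ i ∈ T, {f : Fin m → ℝ | f i ≤ c} := by
    ext f
    simp only [Set.mem_preimage, Set.mem_Iic, Set.mem_iUnion, Set.mem_iInter, Set.mem_setOf_eq,
      orderStat_le_iff f hk1 hkm c]
    constructor
    · intro h
      exact ⟨Finset.univ.filter (fun i => f i ≤ c), h, fun i hi => (Finset.mem_filter.mp hi).2⟩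
    · rintro ⟨T, hT, hTle⟩
      refine le_trans hT (Finset.card_le_card ?_)
      intro i hi
      exact Finset.mem_filter.mpr ⟨Finset.mem_univ i, hTle i hi⟩
  rw [this]
  refine MeasurableSet.iUnion fun T => MeasurableSet.iUnion fun _ =>
    MeasurableSet.biInter T.countable_toSet fun i _ => ?_
  exact measurableSet_le (measurable_pi_apply i) measurable_const

/-- Split conformal prediction coverage: for exchangeable data
`Z 0, ..., Z n` and a fixed score function `S`, with
`q̂` the `⌈(n+1)(1-α)⌉`-th smallest of the first `n` scores,
`P(S(Z_{n+1}) ≤ q̂) ≥ 1 - α`. -/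
theorem split_conformal_coverage
    {Ω : Type*} [MeasurableSpace Ω] (μ : Measure Ω) [IsProbabilityMeasure μ]
    {X Y : Type*} [MeasurableSpace X] [MeasurableSpace Y]
    (n : ℕ) (hn : 0 < n)
    (Z : Fin (n + 1) → Ω → X × Y)
    (hZmeas : ∀ i, Measurable (Z i))
    (hexch : ∀ σ : Equiv.Perm (Fin (n + 1)),
      Measure.map (fun ω => fun i => Z (σ i) ω) μ =
      Measure.map (fun ω => fun i => Z i ω) μ)
    (S : X × Y → ℝ) (hS : Measurable S)
    (α : ℝ) (hα : α ∈ Set.Ioo (0 : ℝ) 1)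
    (hidx : ⌈((n : ℝ) + 1) * (1 - α)⌉₊ ≤ n) :
    1 - α ≤ (μ {ω | S (Z (Fin.last n) ω) ≤
        orderStat (fun i : Fin n => S (Z i.castSucc ω))
          ⌈((n : ℝ) + 1) * (1 - α)⌉₊}).toReal := by
  classical
  obtain ⟨hα0, hα1⟩ := hα
  set k : ℕ := ⌈((n : ℝ) + 1) * (1 - α)⌉₊ with hk
  have hk1 : 1 ≤ k := by
    rw [hk]
    exact Nat.one_le_iff_ne_zero.mpr (by
      have : (0 : ℝ) < ((n : ℝ) + 1) * (1 - α) :=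
        mul_pos (by positivity) (sub_pos.mpr hα1)
      simpa [Nat.pos_iff_ne_zero] using (Nat.ceil_pos.mpr this).ne')
  have hkn : k ≤ n := hidx
  have hkceil : ((n : ℝ) + 1) * (1 - α) ≤ k := Nat.le_ceil _
  -- the event set on the path space
  set A : Set (Fin (n + 1) → X × Y) :=
    {g | S (g (Fin.last n)) ≤ orderStat (fun i : Fin n => S (g i.castSucc)) k} with hAdef
  have hA : MeasurableSet A := by
    apply measurableSet_le
    · exact hS.comp (measurable_pi_apply _)
    · exact (measurable_orderStat hk1 hkn).comp
        (measurable_pi_lambda _ fun i => hS.comp (measurable_pi_apply _))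
  set σ : Fin (n + 1) → Equiv.Perm (Fin (n + 1)) := fun j => Equiv.swap (Fin.last n) j with hσ
  set W : Fin (n + 1) → Ω → (Fin (n + 1) → X × Y) := fun j ω i => Z (σ j i) ω with hW
  have hWmeas : ∀ j, Measurable (W j) := fun j =>
    measurable_pi_lambda _ fun i => hZmeas _
  have hW0 : Measurable (fun ω => fun i => Z i ω) :=
    measurable_pi_lambda _ fun i => hZmeas i
  set E : Fin (n + 1) → Set Ω := fun j => (W j) ⁻¹' A with hE
  have hEmeas : ∀ j, MeasurableSet (E j) := fun j => (hWmeas j) hA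
  set p : ℝ≥0∞ := μ ((fun ω => fun i => Z i ω) ⁻¹' A) with hp
  have hmap : ∀ j, μ (E j) = p := by
    intro j
    have h := hexch (σ j)
    have h1 : (Measure.map (fun ω => fun i => Z ((σ j) i) ω) μ) A
        = (Measure.map (fun ω => fun i => Z i ω) μ) A := by rw [h]
    rw [Measure.map_apply (hWmeas j) hA, Measure.map_apply hW0 hA] at h1
    exact h1
  -- pointwise counting bound
  have hcard : ∀ ω, k ≤ (Finset.univ.filter (fun j => ω ∈ E j)).card := by
    intro ω
    set s : Fin (n + 1) → ℝ := fun j => S (Z j ω) with hs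
    set t : ℝ := orderStat s k with ht
    have h1 : k ≤ (Finset.univ.filter (fun j => s j ≤ t)).card :=
      (orderStat_le_iff s hk1 (by omega) t).mp le_rfl
    have h2 : (Finset.univ.filter (fun j => s j ≤ t))
        ⊆ (Finset.univ.filter (fun j => ω ∈ E j)) := by
      intro j hj
      have hjt : s j ≤ t := (Finset.mem_filter.mp hj).2
      refine Finset.mem_filter.mpr ⟨Finset.mem_univ j, ?_⟩
      -- goal : ω ∈ E j
      show S (Z (σ j (Fin.last n)) ω) ≤ orderStat (fun i : Fin n => S (Z (σ j i.castSucc) ω)) k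
      set c : ℝ := orderStat (fun i : Fin n => S (Z (σ j i.castSucc) ω)) k with hc
      have hcc : k ≤ (Finset.univ.filter (fun i : Fin n => s (σ j i.castSucc) ≤ c)).card :=
        (orderStat_le_iff _ hk1 hkn c).mp le_rfl
    -- inject Fin n into Fin (n+1)
      have hinj : k ≤ (Finset.univ.filter (fun j' : Fin (n + 1) => s j' ≤ c)).card := by
        refine le_trans hcc (Finset.card_le_card_of_injOn
          (fun i => σ j i.castSucc) ?_ ?_)
        · intro i hi
          exact Finset.mem_filter.mpr ⟨Finset.mem_univ _, (Finset.mem_filter.mp hi).2⟩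
        · intro a _ b _ hab
          exact Fin.castSucc_injective n ((σ j).injective hab)
      have htc : t ≤ c := (orderStat_le_iff s hk1 (by omega) c).mpr hinj
      have : σ j (Fin.last n) = j := Equiv.swap_apply_left _ _
      rw [this]
      exact le_trans hjt htc
    exact le_trans h1 (Finset.card_le_card h2)
  -- integrate
  have hsum : (k : ℝ≥0∞) ≤ (n + 1 : ℕ) * p := by
    have hpt : ∀ ω, (k : ℝ≥0∞) ≤ ∑ j, (E j).indicator (fun _ => (1 : ℝ≥0∞)) ω := by
      intro ω
      have : ∑ j, (E j).indicator (fun _ => (1 : ℝ≥0∞)) ω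
          = ((Finset.univ.filter (fun j => ω ∈ E j)).card : ℝ≥0∞) := by
        rw [Finset.card_filter]
        push_cast
        refine Finset.sum_congr rfl fun j _ => ?_
        by_cases hj : ω ∈ E j <;> simp [Set.indicator_apply, hj]
      rw [this]
      exact_mod_cast Nat.cast_le.mpr (hcard ω)
    calc (k : ℝ≥0∞) = ∫⁻ _, (k : ℝ≥0∞) ∂μ := by simp
      _ ≤ ∫⁻ ω, ∑ j, (E j).indicator (fun _ => (1 : ℝ≥0∞)) ω ∂μ := lintegral_mono hpt
      _ = ∑ j, ∫⁻ ω, (E j).indicator (fun _ => (1 : ℝ≥0∞)) ω ∂μ :=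
          lintegral_finset_sum _ fun j _ =>
            (measurable_const.indicator (hEmeas j))
      _ = ∑ j : Fin (n + 1), μ (E j) := by
          refine Finset.sum_congr rfl fun j _ => ?_
          exact lintegral_indicator_one (hEmeas j)
      _ = ∑ _j : Fin (n + 1), p := Finset.sum_congr rfl fun j _ => hmap j
      _ = (n + 1 : ℕ) * p := by
          rw [Finset.sum_const, Finset.card_univ, Fintype.card_fin, nsmul_eq_mul]
  -- conclude
  have hp1 : p ≤ 1 := prob_le_one
  have hptop : p ≠ ⊤ := (lt_of_le_of_lt hp1 ENNReal.one_lt_top).ne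
  have hreal : (k : ℝ) ≤ ((n : ℝ) + 1) * p.toReal := by
    have hfin : ((n + 1 : ℕ) : ℝ≥0∞) * p ≠ ⊤ :=
      ENNReal.mul_ne_top (ENNReal.natCast_ne_top _) hptop
    have := ENNReal.toReal_mono hfin hsum
    rw [ENNReal.toReal_mul] at this
    simpa [ENNReal.toReal_add] using this
  have htarget : μ {ω | S (Z (Fin.last n) ω) ≤
      orderStat (fun i : Fin n => S (Z i.castSucc ω)) k} = p := rfl
  rw [htarget]
  have hpos : (0 : ℝ) < (n : ℝ) + 1 := by positivity
  have := le_trans hkceil hreal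
  nlinarith [this, hpos]
end

section
/- For exchangeable, almost surely distinct random variables S_1, ..., S_{n+1}, and q̂ defined as the ⌈(n+1)(1-α)⌉-th smallest among S_1,...,S_n (assuming ⌈(n+1)(1-α)⌉ ≤ n), the coverage satisfies the upper bound P(S_{n+1} ≤ q̂) ≤ 1 - α + 1/(n+1). -/
open MeasureTheory
open scoped ENNReal

section Aux

open Finset

lemma sorted_le_getD_iff (l : List ℝ) (hs : l.Pairwise (· ≤ ·)) (m : ℕ) (hm : m < l.length)
    (x : ℝ) : x ≤ l.getD m 0 ↔ l.countP (fun y => decide (y < x)) ≤ m := by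
  induction l generalizing m with
  | nil => simp at hm
  | cons a t ih =>
    rw [List.pairwise_cons] at hs
    obtain ⟨ha, ht⟩ := hs
    rcases m with _ | m
    · simp only [List.getD_cons_zero, List.countP_cons, Nat.le_zero]
      constructor
      · intro hx
        rw [List.countP_eq_zero.2, if_neg (by simp only [decide_eq_true_eq]; push_neg; linarith)]
        intro y hy
        simp only [decide_eq_true_eq, not_lt]
        linarith [ha y hy]
      · intro h
        have : ¬ (a < x) := by
          intro hlt
          simp [if_pos, decide_eq_true_eq, hlt] at h
        linarith
    · have hm' : m < t.length := by simpa using hm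
      simp only [List.getD_cons_succ, List.countP_cons]
      rw [ih ht m hm']
      by_cases hax : a < x
      · simp [hax]
      · have hx : x ≤ a := not_lt.1 hax
        have h0 : List.countP (fun y => decide (y < x)) t = 0 := by
          apply List.countP_eq_zero.2
          intro y hy
          simp only [decide_eq_true_eq, not_lt]
          linarith [ha y hy]
        rw [h0, if_neg (by simp [hax])]
        constructor
        · intro _; omega
        · intro _
          have : t.getD m 0 ∈ t := by
            rw [List.getD_eq_getElem _ _ hm']
            exact List.getElem_mem hm'
          linarith [ha _ this]

lemma countP_ofFn (n : ℕ) (g : Fin n → ℝ) (p : ℝ → Prop) [DecidablePred p] :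
    (List.ofFn g).countP (fun y => decide (p y)) = (univ.filter (fun i => p (g i))).card := by
  rw [List.ofFn_eq_map, List.countP_map, Fin.univ_def]
  rw [Finset.card_def, Finset.filter_val]
  simp only [Multiset.filter_coe, Multiset.coe_card, ← List.countP_eq_length_filter]
  rfl

/-- The rank of `f i` among all values of `f` (1-indexed). -/
noncomputable def rnk {m : ℕ} (f : Fin m → ℝ) (i : Fin m) : ℕ :=
  (Finset.univ.filter (fun j => f j ≤ f i)).card

lemma rnk_pos {m : ℕ} (f : Fin m → ℝ) (i : Fin m) : 1 ≤ rnk f i :=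
  Finset.card_pos.2 ⟨i, by simp [rnk]⟩

lemma rnk_le {m : ℕ} (f : Fin m → ℝ) (i : Fin m) : rnk f i ≤ m := by
  simpa [rnk] using Finset.card_filter_le Finset.univ (fun j => f j ≤ f i)

lemma rnk_lt_of_lt {m : ℕ} {f : Fin m → ℝ} {i j : Fin m} (h : f i < f j) :
    rnk f i < rnk f j := by
  apply Finset.card_lt_card
  constructor
  · intro a ha
    simp only [Finset.mem_filter, Finset.mem_univ, true_and] at ha ⊢
    linarith
  · intro hsub
    have := hsub (by simp : j ∈ Finset.univ.filter (fun a => f a ≤ f j))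
    simp only [Finset.mem_filter, Finset.mem_univ, true_and] at this
    linarith

lemma rnk_injective {m : ℕ} {f : Fin m → ℝ} (hf : Function.Injective f) :
    Function.Injective (rnk f) := by
  intro i j hij
  by_contra hne
  rcases lt_trichotomy (f i) (f j) with h | h | h
  · exact absurd hij (Nat.ne_of_lt (rnk_lt_of_lt h))
  · exact hne (hf h)
  · exact absurd hij.symm (Nat.ne_of_lt (rnk_lt_of_lt h))

lemma rnk_surj {m : ℕ} {f : Fin m → ℝ} (hf : Function.Injective f) {r : ℕ}
    (hr1 : 1 ≤ r) (hrm : r ≤ m) : ∃ i, rnk f i = r := by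
  have hm : 0 < m := lt_of_lt_of_le hr1 hrm
  let h : Fin m → Fin m := fun i => ⟨rnk f i - 1, by have := rnk_le f i; have := rnk_pos f i; omega⟩
  have hinj : Function.Injective h := by
    intro i j hij
    apply rnk_injective hf
    have := congrArg Fin.val hij
    simp only [h] at this
    have h1 := rnk_pos f i; have h2 := rnk_pos f j
    omega
  have hsurj : Function.Surjective h := Finite.surjective_of_injective hinj
  obtain ⟨i, hi⟩ := hsurj ⟨r - 1, by omega⟩
  refine ⟨i, ?_⟩
  have := congrArg Fin.val hi
  simp only [h] at this
  have := rnk_pos f i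
  omega

lemma key_iff {n : ℕ} {f : Fin (n + 1) → ℝ} (hf : Function.Injective f) {k : ℕ}
    (hk1 : 1 ≤ k) (hkn : k ≤ n) :
    (f (Fin.last n) ≤ orderStat (fun i : Fin n => f i.castSucc) k ↔
      rnk f (Fin.last n) ≤ k) := by
  set x := f (Fin.last n) with hx
  set g : Fin n → ℝ := fun i => f i.castSucc with hg
  set l := List.insertionSort (· ≤ ·) (List.ofFn g) with hl
  have hlen : l.length = n := by simp [hl]
  have hm : k - 1 < l.length := by omega
  have hsorted : l.Pairwise (· ≤ ·) := List.pairwise_insertionSort _ _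
  have h1 : x ≤ orderStat g k ↔ l.countP (fun y => decide (y < x)) ≤ k - 1 :=
    sorted_le_getD_iff l hsorted (k - 1) hm x
  have h2 : l.countP (fun y => decide (y < x)) =
      (univ.filter (fun i : Fin n => g i < x)).card := by
    rw [hl, (List.perm_insertionSort _ _).countP_eq, countP_ofFn]
  have hne : ∀ i : Fin n, g i ≠ x := by
    intro i hgi
    exact absurd (hf hgi) (Fin.ne_of_lt (Fin.castSucc_lt_last i))
  have h3 : (univ.filter (fun i : Fin n => g i < x)) =
      (univ.filter (fun i : Fin n => g i ≤ x)) := by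
    apply Finset.filter_congr
    intro i _
    constructor
    · intro h; exact le_of_lt h
    · intro h; exact lt_of_le_of_ne h (hne i)
  have h4 : rnk f (Fin.last n) = (univ.filter (fun i : Fin n => g i ≤ x)).card + 1 := by
    rw [rnk, Finset.card_filter, Finset.card_filter, Fin.sum_univ_castSucc]
    simp [hg, ← hx]
  rw [h1, h2, h3, h4]
  omega

lemma rnk_comp_perm {m : ℕ} (g : Fin m → ℝ) (σ : Equiv.Perm (Fin m)) (i : Fin m) :
    rnk (g ∘ σ) i = rnk g (σ i) := by
  rw [rnk, rnk, Finset.card_filter, Finset.card_filter]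
  exact Fintype.sum_equiv σ _ _ (fun j => by simp)

lemma rnk_measurable {m : ℕ} (i : Fin m) :
    Measurable (fun g : Fin m → ℝ => rnk g i) := by
  have : (fun g : Fin m → ℝ => rnk g i) =
      fun g => ∑ j : Fin m, if g j ≤ g i then 1 else 0 := by
    funext g; exact Finset.card_filter _ _
  rw [this]
  exact Finset.measurable_sum _ fun j _ =>
    Measurable.ite (measurableSet_le (measurable_pi_apply j) (measurable_pi_apply i))
      measurable_const measurable_const

lemma injective_measurableSet {m : ℕ} :
    MeasurableSet {g : Fin m → ℝ | Function.Injective g} := by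
  have : {g : Fin m → ℝ | Function.Injective g} =
      ⋂ (i) (j) (_ : i ≠ j), {g : Fin m → ℝ | g i = g j}ᶜ := by
    ext g
    simp only [Set.mem_setOf_eq, Set.mem_iInter, Set.mem_compl_iff, Function.Injective]
    constructor
    · intro h i j hne heq; exact hne (h heq)
    · intro h i j heq; by_contra hne; exact h i j hne heq
  rw [this]
  exact MeasurableSet.iInter fun i => MeasurableSet.iInter fun j =>
    MeasurableSet.iInter fun _ =>
      (measurableSet_eq_fun (measurable_pi_apply i) (measurable_pi_apply j)).compl

end Aux

/-- Upper bound on conformal coverage: for exchangeable, a.s. distinct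
scores `S 0, ..., S n`, with `q̂` the `⌈(n+1)(1-α)⌉`-th smallest of the
first `n` scores, `P(S_{n+1} ≤ q̂) ≤ 1 - α + 1/(n+1)`. -/
theorem conformal_coverage_upper_bound
    {Ω : Type*} [MeasurableSpace Ω] (μ : Measure Ω) [IsProbabilityMeasure μ]
    (n : ℕ) (hn : 0 < n) (S : Fin (n + 1) → Ω → ℝ)
    (hmeas : ∀ i, Measurable (S i))
    (hexch : ∀ σ : Equiv.Perm (Fin (n + 1)),
      Measure.map (fun ω => fun i => S (σ i) ω) μ =
      Measure.map (fun ω => fun i => S i ω) μ)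
    (hdist : ∀ i j, i ≠ j → μ {ω | S i ω = S j ω} = 0)
    (α : ℝ) (hα : α ∈ Set.Ioo (0 : ℝ) 1)
    (hidx : ⌈((n : ℝ) + 1) * (1 - α)⌉₊ ≤ n) :
    (μ {ω | S (Fin.last n) ω ≤
        orderStat (fun i : Fin n => S i.castSucc ω)
          ⌈((n : ℝ) + 1) * (1 - α)⌉₊}).toReal ≤ 1 - α + 1 / ((n : ℝ) + 1) := by
  obtain ⟨hα0, hα1⟩ := hα
  set k := ⌈((n : ℝ) + 1) * (1 - α)⌉₊ with hk
  have hxpos : (0:ℝ) < ((n:ℝ)+1) * (1-α) := by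
    have : (0:ℝ) ≤ (n:ℝ) := Nat.cast_nonneg n
    nlinarith
  have hk1 : 1 ≤ k := Nat.one_le_ceil_iff.2 hxpos
  set V : Ω → (Fin (n+1) → ℝ) := fun ω i => S i ω with hV
  have hVmeas : Measurable V := measurable_pi_lambda _ hmeas
  set I : Set (Fin (n+1) → ℝ) := {g | Function.Injective g} with hI
  set D : Set Ω := V ⁻¹' I with hD
  have hDmeas : MeasurableSet D := hVmeas injective_measurableSet
  have hDc : μ Dᶜ = 0 := by
    have hsub : Dᶜ ⊆ ⋃ (p : Fin (n+1) × Fin (n+1)), ⋃ (_ : p.1 ≠ p.2),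
        {ω | S p.1 ω = S p.2 ω} := by
      intro ω hω
      simp only [hD, hI, Set.mem_compl_iff, Set.mem_preimage, Set.mem_setOf_eq,
        Function.Injective] at hω
      push_neg at hω
      obtain ⟨i, j, heq, hne⟩ := hω
      exact Set.mem_iUnion.2 ⟨(i,j), Set.mem_iUnion.2 ⟨hne, heq⟩⟩
    exact measure_mono_null hsub
      (measure_iUnion_null fun p => measure_iUnion_null fun h => hdist p.1 p.2 h)
  have hD1 : μ D = 1 := by
    have h := measure_add_measure_compl (μ := μ) hDmeas
    rw [hDc, add_zero] at h
    simpa using h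
  set B : Fin (n+1) → ℕ → Set Ω := fun i r => V ⁻¹' (I ∩ {g | rnk g i = r}) with hB
  have hAmeas : ∀ (i : Fin (n+1)) (r : ℕ), MeasurableSet (I ∩ {g | rnk g i = r}) := fun i r =>
    injective_measurableSet.inter ((rnk_measurable i) (measurableSet_singleton r))
  have hBmeas : ∀ i r, MeasurableSet (B i r) := fun i r => hVmeas (hAmeas i r)
  have hexch' : ∀ (i : Fin (n+1)) (r : ℕ), μ (B i r) = μ (B (Fin.last n) r) := by
    intro i r
    set σ := Equiv.swap (Fin.last n) i with hσ
    have h1 := hexch σ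
    have hWmeas : Measurable (fun ω => fun j => S (σ j) ω) :=
      measurable_pi_lambda _ (fun j => hmeas _)
    have h2 : μ ((fun ω => fun j => S (σ j) ω) ⁻¹' (I ∩ {g | rnk g (Fin.last n) = r})) =
        μ (V ⁻¹' (I ∩ {g | rnk g (Fin.last n) = r})) := by
      rw [← Measure.map_apply hWmeas (hAmeas _ r), ← Measure.map_apply hVmeas (hAmeas _ r), h1]
    have h3 : (fun ω => fun j => S (σ j) ω) ⁻¹' (I ∩ {g | rnk g (Fin.last n) = r}) = B i r := by
      ext ω
      simp only [Set.mem_preimage, Set.mem_inter_iff, Set.mem_setOf_eq, hB, hI]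
      have hcomp : (fun j => S (σ j) ω) = V ω ∘ σ := rfl
      rw [hcomp, rnk_comp_perm, Equiv.injective_comp, hσ, Equiv.swap_apply_left]
    rw [h3] at h2
    exact h2
  have hBval : ∀ r : ℕ, 1 ≤ r → r ≤ n + 1 → μ (B (Fin.last n) r) = (((n:ℝ≥0∞)+1))⁻¹ := by
    intro r hr1 hr2
    have hdisj : (↑(Finset.univ : Finset (Fin (n+1))) : Set (Fin (n+1))).PairwiseDisjoint (fun i => B i r) := by
      intro i _ j _ hij
      refine Set.disjoint_left.2 ?_
      intro ω hωi hωj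
      simp only [hB, Set.mem_preimage, Set.mem_inter_iff, Set.mem_setOf_eq, hI] at hωi hωj
      exact hij (rnk_injective hωi.1 (hωi.2.trans hωj.2.symm))
    have hunion : ⋃ i ∈ (Finset.univ : Finset (Fin (n+1))), B i r = D := by
      ext ω
      simp only [hB, hD, hI, Set.mem_iUnion, Set.mem_preimage, Set.mem_inter_iff,
        Set.mem_setOf_eq, Finset.mem_univ, exists_prop, true_and]
      constructor
      · rintro ⟨i, hinj, _⟩; exact hinj
      · intro hinj
        obtain ⟨i, hi⟩ := rnk_surj hinj hr1 hr2
        exact ⟨i, hinj, hi⟩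
    have hsum := measure_biUnion_finset (μ := μ) hdisj (fun i _ => hBmeas i r)
    rw [hunion, hD1] at hsum
    have hall : ∀ i ∈ (Finset.univ : Finset (Fin (n+1))), μ (B i r) = μ (B (Fin.last n) r) :=
      fun i _ => hexch' i r
    rw [Finset.sum_congr rfl hall, Finset.sum_const, Finset.card_univ, Fintype.card_fin,
      nsmul_eq_mul] at hsum
    have hc0 : ((n+1:ℕ) : ℝ≥0∞) ≠ 0 := by simp
    have hctop : ((n+1:ℕ) : ℝ≥0∞) ≠ ⊤ := by simp
    have : (((n+1:ℕ)) : ℝ≥0∞)⁻¹ * (((n+1:ℕ) : ℝ≥0∞) * μ (B (Fin.last n) r)) =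
        μ (B (Fin.last n) r) := by
      rw [← mul_assoc, ENNReal.inv_mul_cancel hc0 hctop, one_mul]
    rw [← hsum, mul_one] at this
    rw [← this]
    push_cast
    ring
  set E : Set Ω := {ω | S (Fin.last n) ω ≤
      orderStat (fun i : Fin n => S i.castSucc ω) k} with hE
  have hEsub : E ∩ D ⊆ ⋃ r ∈ Finset.Icc 1 k, B (Fin.last n) r := by
    rintro ω ⟨hωE, hωD⟩
    have hinj : Function.Injective (V ω) := hωD
    have hle : rnk (V ω) (Fin.last n) ≤ k := by
      rw [← key_iff hinj hk1 hidx]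
      exact hωE
    refine Set.mem_biUnion (Finset.mem_Icc.2 ⟨rnk_pos _ _, hle⟩) ?_
    exact ⟨hinj, rfl⟩
  have hmain : μ E ≤ (k : ℝ≥0∞) * (((n:ℝ≥0∞)+1))⁻¹ := by
    calc μ E ≤ μ ((E ∩ D) ∪ Dᶜ) := measure_mono (by
            intro ω hω
            by_cases hωD : ω ∈ D
            · exact Or.inl ⟨hω, hωD⟩
            · exact Or.inr hωD)
      _ ≤ μ (E ∩ D) + μ Dᶜ := measure_union_le _ _
      _ = μ (E ∩ D) := by rw [hDc, add_zero]
      _ ≤ μ (⋃ r ∈ Finset.Icc 1 k, B (Fin.last n) r) := measure_mono hEsub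
      _ ≤ ∑ r ∈ Finset.Icc 1 k, μ (B (Fin.last n) r) := measure_biUnion_finset_le _ _
      _ = ∑ r ∈ Finset.Icc 1 k, (((n:ℝ≥0∞)+1))⁻¹ := by
            apply Finset.sum_congr rfl
            intro r hr
            rw [Finset.mem_Icc] at hr
            exact hBval r hr.1 (le_trans hr.2 (le_trans hidx (Nat.le_succ n)))
      _ = (k : ℝ≥0∞) * (((n:ℝ≥0∞)+1))⁻¹ := by
            rw [Finset.sum_const, Nat.card_Icc, nsmul_eq_mul]
            norm_num
  have hfin : (k : ℝ≥0∞) * (((n:ℝ≥0∞)+1))⁻¹ ≠ ⊤ := by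
    apply ENNReal.mul_ne_top (by simp)
    simp [ENNReal.inv_ne_top]
  have htor := ENNReal.toReal_mono hfin hmain
  refine le_trans htor ?_
  have htoreal : ((k : ℝ≥0∞) * (((n:ℝ≥0∞)+1))⁻¹).toReal = (k:ℝ) * (((n:ℝ)+1))⁻¹ := by
    have hcast : ((n:ℝ≥0∞)+1) = ((n+1 : ℕ) : ℝ≥0∞) := by push_cast; ring
    rw [ENNReal.toReal_mul, ENNReal.toReal_inv, hcast, ENNReal.toReal_natCast, ENNReal.toReal_natCast]
    push_cast
    ring
  rw [htoreal]
  have hceil : (k:ℝ) < ((n:ℝ)+1) * (1-α) + 1 := Nat.ceil_lt_add_one hxpos.le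
  have hn1 : (0:ℝ) < (n:ℝ) + 1 := by positivity
  have h := mul_le_mul_of_nonneg_right hceil.le (inv_nonneg.2 hn1.le)
  have heq : (((n:ℝ)+1) * (1-α) + 1) * ((n:ℝ)+1)⁻¹ = 1 - α + 1/((n:ℝ)+1) := by
    field_simp
  rw [heq] at h
  exact h
end
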